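/- Fix integers d ≥ 3 and ℓ ≥ 1, and let 𝒴_ℓ be the ball of radius ℓ in the infinite (d−1)-ary tree, with root o, normalized adjacency matrix H_{𝒴_ℓ} and leaf indicator 𝕀∂. For every z ∈ ℂ with Im z > 0, the matrix H_{𝒴_ℓ} − z·I − m_sc(z)·𝕀∂ is invertible, and its inverse P satisfies, for all vertices i, j of 𝒴_ℓ, P_{ij} = m_d(z) · (1 − (−m_sc(z)/√(d−1))^{2·anc(i,j)+2}) · (−m_sc(z)/√(d−1))^{dist(i,j)}, where dist is the graph distance in 𝒴_ℓ and anc(i,j) is the distance from the least common ancestor of i and j to the root o. In particular, P_{oi} = m_sc(z) · (−m_sc(z)/√(d−1))^{dist(o,i)} for every vertex i. -/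

import Mathlib

open scoped Classical

noncomputable section

/-- Vertices of the ball of radius `ℓ` in the infinite `m`-ary rooted tree:
words over `Fin m` of length at most `ℓ`. -/
def TreeBallY (m ℓ : ℕ) : Type := {l : List (Fin m) // l.length ≤ ℓ}

instance (m ℓ : ℕ) : DecidableEq (TreeBallY m ℓ) :=
  inferInstanceAs (DecidableEq {l : List (Fin m) // l.length ≤ ℓ})

instance (m ℓ : ℕ) : Fintype (TreeBallY m ℓ) :=
  Fintype.ofSurjective
    (fun p : (Σ k : Fin (ℓ + 1), List.Vector (Fin m) k) =>
      (⟨p.2.toList, by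
        have h1 : p.2.toList.length = (p.1 : ℕ) := p.2.toList_length
        have h2 := p.1.isLt
        omega⟩ : TreeBallY m ℓ))
    (fun l => ⟨⟨⟨l.1.length, Nat.lt_succ_of_le l.2⟩, ⟨l.1, rfl⟩⟩, rfl⟩)

/-- The tree structure on the ball of radius `ℓ` of the `m`-ary rooted tree:
`x` is adjacent to `y` iff one of them is obtained from the other by appending one letter
(i.e. one is the parent of the other). -/
def treeGraphY (m ℓ : ℕ) : SimpleGraph (TreeBallY m ℓ) :=
  SimpleGraph.fromRel (fun x y => ∃ a : Fin m, y.1 = x.1 ++ [a])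

/-- The root of the tree: the empty word. -/
def rootY (m ℓ : ℕ) : TreeBallY m ℓ := ⟨[], Nat.zero_le _⟩

/-- The normalized adjacency matrix `A/√(d-1)` of the ball `𝒴_ℓ` of radius `ℓ` in the
infinite `(d-1)`-ary tree. -/
def HmatY (d ℓ : ℕ) : Matrix (TreeBallY (d - 1) ℓ) (TreeBallY (d - 1) ℓ) ℂ :=
  fun x y => if (treeGraphY (d - 1) ℓ).Adj x y then (Real.sqrt ((d : ℝ) - 1) : ℂ)⁻¹ else 0

/-- The leaf indicator `𝕀∂` of `𝒴_ℓ`: the diagonal 0-1 matrix whose entry at `x` is `1`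
exactly when `dist(x, o) = ℓ`. -/
def IbdY (d ℓ : ℕ) : Matrix (TreeBallY (d - 1) ℓ) (TreeBallY (d - 1) ℓ) ℂ :=
  Matrix.diagonal (fun x => if (treeGraphY (d - 1) ℓ).dist (rootY (d - 1) ℓ) x = ℓ then 1 else 0)

/-- Vertices of the ball `𝒳_ℓ` of radius `ℓ` in the infinite `d`-regular tree: the root
(`none`), or a first step in `Fin d` followed by a word over `Fin (d-1)` of length at most
`ℓ - 1`. -/
def TreeBallX (d ℓ : ℕ) : Type := Option (Fin d × TreeBallY (d - 1) (ℓ - 1))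

instance (d ℓ : ℕ) : DecidableEq (TreeBallX d ℓ) :=
  inferInstanceAs (DecidableEq (Option (Fin d × TreeBallY (d - 1) (ℓ - 1))))

instance (d ℓ : ℕ) : Fintype (TreeBallX d ℓ) :=
  inferInstanceAs (Fintype (Option (Fin d × TreeBallY (d - 1) (ℓ - 1))))

/-- The tree structure on the ball `𝒳_ℓ` of radius `ℓ` of the `d`-regular tree: the root is
adjacent to the `d` one-step vertices, and within each branch two vertices are adjacent iff one
is the parent of the other. -/
def treeGraphX (d ℓ : ℕ) : SimpleGraph (TreeBallX d ℓ) :=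
  SimpleGraph.fromRel (fun x y =>
    (∃ a : Fin d, x = none ∧ y = some (a, ⟨[], Nat.zero_le _⟩)) ∨
    (∃ (a : Fin d) (s t : TreeBallY (d - 1) (ℓ - 1)),
      x = some (a, s) ∧ y = some (a, t) ∧ ∃ b : Fin (d - 1), t.1 = s.1 ++ [b]))

/-- The root of the `d`-regular tree ball `𝒳_ℓ`. -/
def rootX (d ℓ : ℕ) : TreeBallX d ℓ := none

/-- The normalized adjacency matrix `A/√(d-1)` of the ball `𝒳_ℓ` of radius `ℓ` in the
infinite `d`-regular tree. -/
def HmatX (d ℓ : ℕ) : Matrix (TreeBallX d ℓ) (TreeBallX d ℓ) ℂ :=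
  fun x y => if (treeGraphX d ℓ).Adj x y then (Real.sqrt ((d : ℝ) - 1) : ℂ)⁻¹ else 0

/-- The leaf indicator `𝕀∂` of `𝒳_ℓ`. -/
def IbdX (d ℓ : ℕ) : Matrix (TreeBallX d ℓ) (TreeBallX d ℓ) ℂ :=
  Matrix.diagonal (fun x => if (treeGraphX d ℓ).dist (rootX d ℓ) x = ℓ then 1 else 0)

/-- Longest common prefix of two words. -/
def lcp {m : ℕ} : List (Fin m) → List (Fin m) → List (Fin m)
  | [], _ => []
  | _ :: _, [] => []
  | a :: s, b :: t => if a = b then a :: lcp s t else []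

theorem lcp_length_le_left {m : ℕ} : ∀ s t : List (Fin m), (lcp s t).length ≤ s.length
  | [], _ => by simp [lcp]
  | _ :: _, [] => by simp [lcp]
  | a :: s, b :: t => by
    by_cases h : a = b
    · simp only [lcp, if_pos h, List.length_cons]
      exact Nat.succ_le_succ (lcp_length_le_left s t)
    · simp [lcp, h]

/-- The least common ancestor of two vertices of `𝒴_ℓ`: their longest common prefix. -/
def lcaY {m ℓ : ℕ} (x y : TreeBallY m ℓ) : TreeBallY m ℓ :=
  ⟨lcp x.1 y.1, le_trans (lcp_length_le_left _ _) x.2⟩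

/-- `anc(x,y)`: the distance from the least common ancestor of `x` and `y` to the root `o`. -/
def ancY {m ℓ : ℕ} (x y : TreeBallY m ℓ) : ℕ :=
  (treeGraphY m ℓ).dist (rootY m ℓ) (lcaY x y)

end
namespace GreenAux

open SimpleGraph

theorem lcp_nil_left {m : ℕ} (t : List (Fin m)) : lcp [] t = [] := rfl

theorem lcp_nil_right {m : ℕ} : ∀ s : List (Fin m), lcp s [] = []
  | [] => rfl
  | _ :: _ => rfl

theorem lcp_append {m : ℕ} : ∀ (x s t : List (Fin m)), lcp (x ++ s) (x ++ t) = x ++ lcp s t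
  | [], s, t => rfl
  | a :: x, s, t => by
    show lcp (a :: (x ++ s)) (a :: (x ++ t)) = _
    simp [lcp, lcp_append x s t]

theorem lcp_self {m : ℕ} (s : List (Fin m)) : lcp s s = s := by
  have := lcp_append s [] []
  simpa [lcp_nil_left] using this

theorem lcp_prefix_left {m : ℕ} : ∀ s t : List (Fin m), lcp s t <+: s
  | [], _ => by simp [lcp]
  | _ :: _, [] => by simp [lcp]
  | a :: s, b :: t => by
    by_cases h : a = b
    · subst h
      simp only [lcp, if_pos rfl]
      exact List.cons_prefix_cons.mpr ⟨rfl, lcp_prefix_left s t⟩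
    · simp [lcp, h]

theorem lcp_prefix_right {m : ℕ} : ∀ s t : List (Fin m), lcp s t <+: t
  | [], _ => by simp [lcp]
  | _ :: _, [] => by simp [lcp]
  | a :: s, b :: t => by
    by_cases h : a = b
    · subst h
      simp only [lcp, if_pos rfl]
      exact List.cons_prefix_cons.mpr ⟨rfl, lcp_prefix_right s t⟩
    · simp [lcp, h]

theorem prefix_lcp {m : ℕ} (c s t : List (Fin m)) (hs : c <+: s) (ht : c <+: t) :
    c <+: lcp s t := by
  obtain ⟨s', rfl⟩ := hs
  obtain ⟨t', rfl⟩ := ht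
  rw [lcp_append]
  exact List.prefix_append _ _

theorem lcp_decomp {m : ℕ} (s t : List (Fin m)) :
    ∃ s' t', s = lcp s t ++ s' ∧ t = lcp s t ++ t' ∧
      (∀ (a : Fin m) s'' t'', s' = a :: s'' → t' = a :: t'' → False) := by
  obtain ⟨s', hs⟩ := lcp_prefix_left s t
  obtain ⟨t', ht⟩ := lcp_prefix_right s t
  refine ⟨s', t', hs.symm, ht.symm, ?_⟩
  rintro a s'' t'' rfl rfl
  have h1 : lcp s t ++ [a] <+: s := by
    conv_rhs => rw [← hs]
    exact ⟨s'', by simp⟩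
  have h2 : lcp s t ++ [a] <+: t := by
    conv_rhs => rw [← ht]
    exact ⟨t'', by simp⟩
  have h3 := (prefix_lcp _ s t h1 h2).length_le
  simp at h3

theorem adjY_iff {m ℓ : ℕ} {x y : TreeBallY m ℓ} :
    (treeGraphY m ℓ).Adj x y ↔ (∃ a, y.1 = x.1 ++ [a]) ∨ (∃ a, x.1 = y.1 ++ [a]) := by
  rw [treeGraphY, SimpleGraph.fromRel_adj]
  constructor
  · rintro ⟨-, h⟩; exact h
  · intro h
    refine ⟨?_, h⟩
    rintro rfl
    rcases h with ⟨a, ha⟩ | ⟨a, ha⟩ <;>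
    · have := congrArg List.length ha
      simp at this

theorem reach_aux {m ℓ : ℕ} :
    ∀ (r : List (Fin m)) (x y : TreeBallY m ℓ), y.1 = x.1 ++ r →
      ∃ w : (treeGraphY m ℓ).Walk x y, w.length = r.length
  | [], x, y, h => by
    have : x = y := Subtype.ext (by simp [h])
    subst this
    exact ⟨SimpleGraph.Walk.nil, rfl⟩
  | a :: r, x, y, h => by
    have hx' : (x.1 ++ [a]).length ≤ ℓ := by
      have h2 := y.2
      rw [h] at h2
      simp only [List.length_append, List.length_cons, List.length_nil,
        List.length_singleton] at h2 ⊢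
      omega
    have hadj : (treeGraphY m ℓ).Adj x ⟨x.1 ++ [a], hx'⟩ := adjY_iff.mpr (Or.inl ⟨a, rfl⟩)
    have h' : y.1 = (⟨x.1 ++ [a], hx'⟩ : TreeBallY m ℓ).1 ++ r := by rw [h]; simp
    obtain ⟨w, hw⟩ := reach_aux r _ y h'
    exact ⟨SimpleGraph.Walk.cons hadj w, (SimpleGraph.Walk.length_cons hadj w).trans (congrArg (· + 1) hw)⟩

/-- step lemma for lcp lengths -/
theorem lcp_concat_cases {m : ℕ} (x : List (Fin m)) (a : Fin m) (y : List (Fin m)) :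
    (lcp x y).length ≤ (lcp (x ++ [a]) y).length ∧
      (lcp (x ++ [a]) y).length ≤ (lcp x y).length + 1 := by
  constructor
  · exact ((prefix_lcp _ _ _ ((lcp_prefix_left x y).trans (List.prefix_append x [a]))
      (lcp_prefix_right x y)).length_le)
  · have hc := lcp_prefix_left (x ++ [a]) y
    have hcy := lcp_prefix_right (x ++ [a]) y
    have hlen := hc.length_le
    simp only [List.length_append, List.length_singleton] at hlen
    rcases Nat.lt_or_ge (lcp (x ++ [a]) y).length (x.length + 1) with h | h
    · -- prefix of x
      have hpx : lcp (x ++ [a]) y <+: x := by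
        have h1 : lcp (x ++ [a]) y = (x ++ [a]).take (lcp (x ++ [a]) y).length :=
          List.prefix_iff_eq_take.mp hc
        rw [List.take_append_of_le_length (by omega)] at h1
        rw [h1]
        exact List.take_prefix _ _
      have := (prefix_lcp _ x y hpx hcy).length_le
      omega
    · -- full length: lcp = x ++ [a]
      have hEq : lcp (x ++ [a]) y = x ++ [a] :=
        List.IsPrefix.eq_of_length hc (by
          simp only [List.length_append, List.length_singleton]; omega)
      have hxy : x <+: y := (List.prefix_append x [a]).trans (hEq ▸ hcy)
      have := (prefix_lcp x x y List.prefix_rfl hxy).length_le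
      have h2 := (lcp_prefix_left x y).length_le
      omega

theorem walk_lower {m ℓ : ℕ} {x y : TreeBallY m ℓ} (w : (treeGraphY m ℓ).Walk x y) :
    x.1.length + y.1.length ≤ w.length + 2 * (lcp x.1 y.1).length := by
  induction w with
  | nil => simp only [lcp_self, SimpleGraph.Walk.length_nil]; omega
  | @cons x x₁ y hadj w ih =>
    rcases adjY_iff.mp hadj with ⟨a, ha⟩ | ⟨a, ha⟩
    · -- x₁.1 = x.1 ++ [a]
      have hcc := lcp_concat_cases x.1 a y.1
      rw [← ha] at hcc
      have hlen : x₁.1.length = x.1.length + 1 := by rw [ha]; simp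
      simp only [SimpleGraph.Walk.length_cons]
      omega
    · -- x.1 = x₁.1 ++ [a]
      have hcc := lcp_concat_cases x₁.1 a y.1
      rw [← ha] at hcc
      have hlen : x.1.length = x₁.1.length + 1 := by rw [ha]; simp
      simp only [SimpleGraph.Walk.length_cons]
      omega

theorem distY_eq {m ℓ : ℕ} (x y : TreeBallY m ℓ) :
    (treeGraphY m ℓ).dist x y + 2 * (lcp x.1 y.1).length = x.1.length + y.1.length := by
  obtain ⟨s', t', hs, ht, -⟩ := lcp_decomp x.1 y.1
  have hlca : (lcp x.1 y.1).length ≤ ℓ :=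
    le_trans (List.IsPrefix.length_le (lcp_prefix_left _ _)) x.2
  obtain ⟨w1, hw1⟩ := reach_aux s' ⟨lcp x.1 y.1, hlca⟩ x hs
  obtain ⟨w2, hw2⟩ := reach_aux t' ⟨lcp x.1 y.1, hlca⟩ y ht
  have hub := SimpleGraph.dist_le (w1.reverse.append w2)
  have hreach : (treeGraphY m ℓ).Reachable x y := ⟨w1.reverse.append w2⟩
  obtain ⟨w, hw⟩ := hreach.exists_walk_length_eq_dist
  have hlb := walk_lower w
  have hxlen : x.1.length = (lcp x.1 y.1).length + s'.length := by
    conv_lhs => rw [hs]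
    simp
  have hylen : y.1.length = (lcp x.1 y.1).length + t'.length := by
    conv_lhs => rw [ht]
    simp
  have hlen2 : (w1.reverse.append w2).length = s'.length + t'.length := by
    exact (SimpleGraph.Walk.length_append _ _).trans
      (congrArg₂ (· + ·) ((SimpleGraph.Walk.length_reverse _).trans hw1) hw2)
  omega

noncomputable section

def parY {m ℓ : ℕ} (i : TreeBallY m ℓ) : TreeBallY m ℓ :=
  ⟨i.1.dropLast, by rw [List.length_dropLast]; exact le_trans (Nat.sub_le _ _) i.2⟩

def childY {m ℓ : ℕ} (i : TreeBallY m ℓ) (a : Fin m) : TreeBallY m ℓ :=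
  if h : i.1.length < ℓ then
    ⟨i.1 ++ [a], by rw [List.length_append, List.length_singleton]; omega⟩
  else i

theorem childY_coe {m ℓ : ℕ} (i : TreeBallY m ℓ) (a : Fin m) (h : i.1.length < ℓ) :
    (childY i a).1 = i.1 ++ [a] := by simp [childY, h]

theorem sum_adj {m ℓ : ℕ} (i : TreeBallY m ℓ) (f : TreeBallY m ℓ → ℂ) :
    (∑ k : TreeBallY m ℓ, if (treeGraphY m ℓ).Adj i k then f k else 0) =
      (if i.1 = [] then 0 else f (parY i)) +
      (if i.1.length < ℓ then ∑ a : Fin m, f (childY i a) else 0) := by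
  have hsplit : ∀ k : TreeBallY m ℓ, (if (treeGraphY m ℓ).Adj i k then f k else 0) =
      (if ∃ a : Fin m, i.1 = k.1 ++ [a] then f k else 0) +
      (if ∃ a : Fin m, k.1 = i.1 ++ [a] then f k else 0) := by
    intro k
    by_cases h1 : ∃ a : Fin m, k.1 = i.1 ++ [a] <;>
      by_cases h2 : ∃ a : Fin m, i.1 = k.1 ++ [a]
    · exfalso
      obtain ⟨a, ha⟩ := h1
      obtain ⟨b, hb⟩ := h2
      rw [ha] at hb
      have := congrArg List.length hb
      simp at this
    · simp [adjY_iff, h1, h2]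
    · simp [adjY_iff, h1, h2]
    · simp [adjY_iff, h1, h2]
  rw [Finset.sum_congr rfl fun k _ => hsplit k, Finset.sum_add_distrib]
  congr 1
  · -- parent part
    by_cases h : i.1 = []
    · rw [if_pos h]
      apply Finset.sum_eq_zero
      intro k _
      rw [if_neg]
      rintro ⟨a, ha⟩
      rw [h] at ha
      have := congrArg List.length ha
      simp at this
    · rw [if_neg h]
      have hiff : ∀ k : TreeBallY m ℓ, (∃ a : Fin m, i.1 = k.1 ++ [a]) ↔ k = parY i := by
        intro k
        constructor
        · rintro ⟨a, ha⟩
          apply Subtype.ext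
          show k.1 = i.1.dropLast
          rw [ha, List.dropLast_concat]
        · rintro rfl
          exact ⟨i.1.getLast h, (List.dropLast_append_getLast h).symm⟩
      simp_rw [hiff]
      simp
  · -- children part
    by_cases h : i.1.length < ℓ
    · rw [if_pos h]
      rw [← Finset.sum_filter]
      have himg : Finset.univ.filter (fun k : TreeBallY m ℓ => ∃ a : Fin m, k.1 = i.1 ++ [a]) =
          Finset.univ.image (fun a : Fin m => childY i a) := by
        ext k
        simp only [Finset.mem_filter, Finset.mem_univ, true_and, Finset.mem_image]
        constructor
        · rintro ⟨a, ha⟩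
          exact ⟨a, by apply Subtype.ext; rw [childY_coe i a h, ← ha]⟩
        · rintro ⟨a, rfl⟩
          exact ⟨a, childY_coe i a h⟩
      rw [himg, Finset.sum_image]
      intro a _ b _ hab
      have := congrArg (fun x : TreeBallY m ℓ => x.1) hab
      simp only [childY_coe _ _ h] at this
      simpa using this
    · rw [if_neg h]
      apply Finset.sum_eq_zero
      intro k _
      rw [if_neg]
      rintro ⟨a, ha⟩
      have := k.2
      rw [ha] at this
      simp only [List.length_append, List.length_singleton] at this
      omega

end

theorem scalarA1 (s u z m md dd : ℂ) (L n : ℕ)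
    (r1 : m ^ 2 + z * m + 1 = 0) (r2 : s * u = -m) (r3 : s ^ 2 = dd - 1)
    (r4 : s * s⁻¹ = 1) :
    s⁻¹ * (md * (1 - u ^ (2 * L + 2)) * u ^ n)
      + (dd - 1) * (s⁻¹ * (md * (1 - u ^ (2 * L + 2)) * u ^ (n + 2)))
      - z * (md * (1 - u ^ (2 * L + 2)) * u ^ (n + 1)) = 0 := by
  have key0 : 1 + (dd - 1) * u ^ 2 - z * (s * u) = 0 := by
    linear_combination r1 + (s * u - m - z) * r2 - u ^ 2 * r3
  linear_combination (s⁻¹ * md * (1 - u ^ (2 * L + 2)) * u ^ n) * key0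
    + (z * md * (1 - u ^ (2 * L + 2)) * u ^ n * u) * r4

theorem scalarA2 (s u z m md dd : ℂ) (L n : ℕ)
    (r1 : m ^ 2 + z * m + 1 = 0) (r2 : s * u = -m) (r4 : s * s⁻¹ = 1) :
    s⁻¹ * (md * (1 - u ^ (2 * L + 2)) * u ^ n)
      - z * (md * (1 - u ^ (2 * L + 2)) * u ^ (n + 1))
      - m * (md * (1 - u ^ (2 * L + 2)) * u ^ (n + 1)) = 0 := by
  have keyA2 : 1 - (z + m) * (s * u) = 0 := by
    linear_combination r1 - (z + m) * r2
  linear_combination (s⁻¹ * md * (1 - u ^ (2 * L + 2)) * u ^ n) * keyA2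
    + ((z + m) * md * (1 - u ^ (2 * L + 2)) * u ^ n * u) * r4

theorem scalarB (s u z m md dd : ℂ) (L c : ℕ)
    (r1 : m ^ 2 + z * m + 1 = 0) (r2 : s * u = -m) (r3 : s ^ 2 = dd - 1)
    (r4 : s * s⁻¹ = 1) :
    s⁻¹ * (md * (1 - u ^ (2 * L)) * u ^ (c + 2))
      + (s⁻¹ * (md * (1 - u ^ (2 * (L + 1) + 2)) * u ^ c)
        + (dd - 1 - 1) * (s⁻¹ * (md * (1 - u ^ (2 * L + 2)) * u ^ (c + 2))))
      - z * (md * (1 - u ^ (2 * L + 2)) * u ^ (c + 1)) = 0 := by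
  have key0 : 1 + (dd - 1) * u ^ 2 - z * (s * u) = 0 := by
    linear_combination r1 + (s * u - m - z) * r2 - u ^ 2 * r3
  linear_combination (s⁻¹ * md * (1 - u ^ (2 * L + 2)) * u ^ c) * key0
    + (z * md * (1 - u ^ (2 * L + 2)) * u ^ c * u) * r4

theorem scalarC1 (s u z m md F dd : ℂ) (L : ℕ)
    (r1 : m ^ 2 + z * m + 1 = 0) (r2 : s * u = -m) (r3 : s ^ 2 = dd - 1)
    (r4 : s * s⁻¹ = 1) (r5 : F * (dd - 1) = dd) (r6 : (-z - F * m) * md = 1) :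
    s⁻¹ * (md * (1 - u ^ (2 * L)) * u)
      + (dd - 1) * (s⁻¹ * (md * (1 - u ^ (2 * L + 2)) * u))
      - z * (md * (1 - u ^ (2 * L + 2))) = 1 := by
  have key0 : 1 + (dd - 1) * u ^ 2 - z * (s * u) = 0 := by
    linear_combination r1 + (s * u - m - z) * r2 - u ^ 2 * r3
  have hcore : s⁻¹ * u * (1 - u ^ (2 * L)) + (dd - 1) * (s⁻¹ * u) * (1 - u ^ (2 * L) * u ^ 2)
      - z * (1 - u ^ (2 * L) * u ^ 2) = -z - F * m := by
    linear_combination (-(u ^ (2 * L)) * u * s⁻¹) * key0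
      + (-(u ^ (2 * L)) * u * z * u + F * u * s) * r4 + F * r2 - F * u * s⁻¹ * r3
      - s⁻¹ * u * r5
  linear_combination md * hcore + r6

theorem scalarC2 (s u z m md F dd : ℂ) (L : ℕ)
    (r1 : m ^ 2 + z * m + 1 = 0) (r2 : s * u = -m) (r3 : s ^ 2 = dd - 1)
    (r4 : s * s⁻¹ = 1) (r5 : F * (dd - 1) = dd) (r6 : (-z - F * m) * md = 1) :
    s⁻¹ * (md * (1 - u ^ (2 * L)) * u)
      - z * (md * (1 - u ^ (2 * L + 2)))
      - m * (md * (1 - u ^ (2 * L + 2))) = 1 := by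
  have keyA2 : 1 - (z + m) * (s * u) = 0 := by
    linear_combination r1 - (z + m) * r2
  have hcore : s⁻¹ * u * (1 - u ^ (2 * L)) - z * (1 - u ^ (2 * L) * u ^ 2)
      - m * (1 - u ^ (2 * L) * u ^ 2) = -z - F * m := by
    linear_combination (-(u ^ (2 * L)) * u * s⁻¹) * keyA2
      + (-(u ^ (2 * L)) * u * (z + m) * u + F * u * s - s * u) * r4 + (F - 1) * r2
      + (s⁻¹ * u - F * u * s⁻¹) * r3 - s⁻¹ * u * r5
  linear_combination md * hcore + r6

theorem scalarRoot (s u z m md F dd : ℂ)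
    (r1 : m ^ 2 + z * m + 1 = 0) (r2 : s * u = -m) (r3 : s ^ 2 = dd - 1)
    (r5 : F * (dd - 1) = dd) (r6 : (-z - F * m) * md = 1) :
    md * (1 - u ^ 2) = m := by
  linear_combination md * r1 + (md * ((F - 1) * (m - s * u))) * r2
    + (md * ((F - 1) * u ^ 2)) * r3 + (md * u ^ 2) * r5 + m * r6

theorem sum_ite_fin {n : ℕ} (e : Fin n) (X Y : ℂ) :
    (∑ a : Fin n, if a = e then X else Y) = X + ((n : ℂ) - 1) * Y := by
  have h : ∀ a : Fin n, (if a = e then X else Y) = (if a = e then X - Y else 0) + Y := by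
    intro a; split_ifs <;> ring
  simp_rw [h]
  rw [Finset.sum_add_distrib, Finset.sum_const, Finset.card_univ, Fintype.card_fin,
    Finset.sum_ite_eq' Finset.univ e (fun _ => X - Y)]
  simp only [Finset.mem_univ, if_true, nsmul_eq_mul]
  have : 0 < n := e.pos
  ring

theorem eq_nil_or_append {α : Type*} (l : List α) : l = [] ∨ ∃ l₂ b, l = l₂ ++ [b] := by
  rcases l.eq_nil_or_concat with h | ⟨l₂, b, h⟩
  · exact Or.inl h
  · exact Or.inr ⟨l₂, b, by simpa [List.concat_eq_append] using h⟩

end GreenAux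

/-- **Green's function of the `(d-1)`-ary tree ball.** Fix `d ≥ 3`, `ℓ ≥ 1`, and `z ∈ ℂ` with
`Im z > 0`; let `m_sc(z)` be the unique root of `m² + z m + 1 = 0` with positive imaginary part
and `m_d(z) = 1/(-z - (d/(d-1)) m_sc(z))`. Then `H_{𝒴_ℓ} - z·I - m_sc(z)·𝕀∂` is invertible,
its inverse `P` satisfies
`P_{ij} = m_d(z) · (1 - (-m_sc(z)/√(d-1))^{2 anc(i,j)+2}) · (-m_sc(z)/√(d-1))^{dist(i,j)}`,
and in particular `P_{oi} = m_sc(z) · (-m_sc(z)/√(d-1))^{dist(o,i)}`. -/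
theorem green_function_ary_tree_ball (d ℓ : ℕ) (hd : 3 ≤ d) (hℓ : 1 ≤ ℓ)
    (z msc : ℂ) (hz : 0 < z.im)
    (hmsc : msc ^ 2 + z * msc + 1 = 0) (him : 0 < msc.im) :
    IsUnit (HmatY d ℓ - z • (1 : Matrix (TreeBallY (d - 1) ℓ) (TreeBallY (d - 1) ℓ) ℂ)
        - msc • IbdY d ℓ) ∧
    (∀ i j : TreeBallY (d - 1) ℓ,
      ((HmatY d ℓ - z • 1 - msc • IbdY d ℓ)⁻¹) i j =
        (-z - ((d : ℂ) / ((d : ℂ) - 1)) * msc)⁻¹ *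
          (1 - (-(msc / (Real.sqrt ((d : ℝ) - 1) : ℂ))) ^ (2 * ancY i j + 2)) *
          (-(msc / (Real.sqrt ((d : ℝ) - 1) : ℂ))) ^ ((treeGraphY (d - 1) ℓ).dist i j)) ∧
    (∀ i : TreeBallY (d - 1) ℓ,
      ((HmatY d ℓ - z • 1 - msc • IbdY d ℓ)⁻¹) (rootY (d - 1) ℓ) i =
        msc * (-(msc / (Real.sqrt ((d : ℝ) - 1) : ℂ))) ^
          ((treeGraphY (d - 1) ℓ).dist (rootY (d - 1) ℓ) i)) := by
  classical
  set s : ℂ := (Real.sqrt ((d : ℝ) - 1) : ℂ) with hsdef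
  set u : ℂ := -(msc / s) with hu
  set md : ℂ := (-z - (d : ℂ) / ((d : ℂ) - 1) * msc)⁻¹ with hmddef
  have hd3R : (3 : ℝ) ≤ (d : ℝ) := by exact_mod_cast hd
  have hs2 : s ^ 2 = (d : ℂ) - 1 := by
    rw [hsdef, ← Complex.ofReal_pow, Real.sq_sqrt (by linarith)]
    push_cast
    ring
  have hq0 : ((d : ℂ) - 1) ≠ 0 := by
    intro h
    have h1 : (d : ℂ) = ((1 : ℕ) : ℂ) := by push_cast; linear_combination h
    have h2 : d = 1 := Nat.cast_injective h1
    omega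
  have hs0 : s ≠ 0 := by
    intro h
    apply hq0
    rw [← hs2, h]
    ring
  have hmsc0 : msc ≠ 0 := by
    intro h
    rw [h] at him
    simp at him
  have hST : s * s⁻¹ = 1 := mul_inv_cancel₀ hs0
  have hsu : s * u = -msc := by
    rw [hu]
    field_simp
  have hrpos : (0 : ℝ) < (d : ℝ) / ((d : ℝ) - 1) := div_pos (by linarith) (by linarith)
  have hcast : (d : ℂ) / ((d : ℂ) - 1) = (((d : ℝ) / ((d : ℝ) - 1) : ℝ) : ℂ) := by
    push_cast
    ring
  have hD0 : (-z - (d : ℂ) / ((d : ℂ) - 1) * msc) ≠ 0 := by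
    intro h
    have h2 := congrArg Complex.im h
    rw [hcast] at h2
    simp only [Complex.sub_im, Complex.neg_im, Complex.zero_im, Complex.mul_im,
      Complex.ofReal_re, Complex.ofReal_im, zero_mul, add_zero] at h2
    nlinarith [mul_pos hrpos him]
  have hr6 : (-z - (d : ℂ) / ((d : ℂ) - 1) * msc) * md = 1 := by
    rw [hmddef]
    exact mul_inv_cancel₀ hD0
  have hr5 : ((d : ℂ) / ((d : ℂ) - 1)) * ((d : ℂ) - 1) = (d : ℂ) := div_mul_cancel₀ _ hq0
  have hcastD : ((d - 1 : ℕ) : ℂ) = (d : ℂ) - 1 := by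
    rw [Nat.cast_sub (by omega : 1 ≤ d)]
    simp
  set P : Matrix (TreeBallY (d - 1) ℓ) (TreeBallY (d - 1) ℓ) ℂ := fun x y =>
    md * (1 - u ^ (2 * (lcp x.1 y.1).length + 2))
      * u ^ (x.1.length + y.1.length - 2 * (lcp x.1 y.1).length) with hP
  have hroot : ∀ x : TreeBallY (d - 1) ℓ,
      (treeGraphY (d - 1) ℓ).dist (rootY (d - 1) ℓ) x = x.1.length := by
    intro x
    have h1 := GreenAux.distY_eq (rootY (d - 1) ℓ) x
    have h2 : lcp (rootY (d - 1) ℓ).1 x.1 = [] := rfl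
    rw [h2] at h1
    simp only [List.length_nil] at h1
    have h3 : (rootY (d - 1) ℓ).1.length = 0 := rfl
    omega
  have hanc : ∀ x y : TreeBallY (d - 1) ℓ, ancY x y = (lcp x.1 y.1).length := by
    intro x y
    show (treeGraphY (d - 1) ℓ).dist (rootY (d - 1) ℓ) (lcaY x y) = _
    rw [hroot]
    rfl
  have hdistf : ∀ x y : TreeBallY (d - 1) ℓ, (treeGraphY (d - 1) ℓ).dist x y
      = x.1.length + y.1.length - 2 * (lcp x.1 y.1).length := by
    intro x y
    have h1 := GreenAux.distY_eq x y
    omega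
  have hPval : ∀ (x y : TreeBallY (d - 1) ℓ) (w : List (Fin (d - 1))) (n : ℕ),
      lcp x.1 y.1 = w → x.1.length + y.1.length = 2 * w.length + n →
      P x y = md * (1 - u ^ (2 * w.length + 2)) * u ^ n := by
    intro x y w n h1 h2
    simp only [hP]
    rw [h1]
    have h3 : x.1.length + y.1.length - 2 * w.length = n := by omega
    rw [h3]
  have key : ∀ i j : TreeBallY (d - 1) ℓ,
      (∑ k, (HmatY d ℓ - z • 1 - msc • IbdY d ℓ) i k * P k j) = if i = j then 1 else 0 := by
    intro i j
    have hentry : ∀ k, (HmatY d ℓ - z • 1 - msc • IbdY d ℓ) i k * P k j =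
        (if (treeGraphY (d - 1) ℓ).Adj i k then s⁻¹ * P k j else 0)
        - (if i = k then z * P k j else 0)
        - (if i = k then (if i.1.length = ℓ then msc * P k j else 0) else 0) := by
      intro k
      simp only [Matrix.sub_apply, Matrix.smul_apply, HmatY, IbdY, Matrix.one_apply,
        Matrix.diagonal_apply, smul_eq_mul, hroot, ← hsdef]
      split_ifs <;> ring
    rw [Finset.sum_congr rfl fun k _ => hentry k, Finset.sum_sub_distrib, Finset.sum_sub_distrib,
      Finset.sum_ite_eq, Finset.sum_ite_eq, GreenAux.sum_adj i (fun k => s⁻¹ * P k j)]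
    simp only [Finset.mem_univ, if_true]
    obtain ⟨s', t', hsd, htd, hcond⟩ := GreenAux.lcp_decomp i.1 j.1
    have hLi : i.1.length = (lcp i.1 j.1).length + s'.length := by
      conv_lhs => rw [hsd]
      simp
    have hLj : j.1.length = (lcp i.1 j.1).length + t'.length := by
      conv_lhs => rw [htd]
      simp
    have hilen : i.1.length ≤ ℓ := i.2
    have hjlen : j.1.length ≤ ℓ := j.2
    obtain ⟨p, hpl⟩ : ∃ p, lcp i.1 j.1 = p := ⟨_, rfl⟩
    rw [hpl] at hsd htd hLi hLj
    rcases s' with _ | ⟨c, s₂⟩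
    · -- i lies on the path from the root to j
      simp only [List.length_nil, add_zero] at hLi
      have hip : i.1 = p := by simpa using hsd
      rcases t' with _ | ⟨e, t₂⟩
      · -- i = j
        simp only [List.length_nil, add_zero] at hLj
        have hjp : j.1 = p := by simpa using htd
        have hij : i = j := Subtype.ext (by rw [hip, hjp])
        rw [if_pos hij]
        have hPii : P i j = md * (1 - u ^ (2 * p.length + 2)) * u ^ 0 :=
          hPval i j p 0 hpl (by omega)
        rcases eq_or_lt_of_le hilen with hleaf | hint
        · -- i = j is a leaf
          rw [if_neg (by omega : ¬ i.1.length < ℓ), if_pos hleaf]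
          have hpne : i.1 ≠ [] := by
            intro h
            rw [h] at hleaf
            simp at hleaf
            omega
          obtain rfl | ⟨p₂, c', rfl⟩ := GreenAux.eq_nil_or_append p
          · exact absurd hip hpne
          · have hdrop : (GreenAux.parY i).1 = p₂ := by
              show i.1.dropLast = p₂
              rw [hip, List.dropLast_concat]
            have hlcpp : lcp (GreenAux.parY i).1 j.1 = p₂ := by
              rw [hdrop, hjp]
              have h6 := GreenAux.lcp_append p₂ [] [c']
              simpa [GreenAux.lcp_nil_left] using h6
            have hPpar : P (GreenAux.parY i) j = md * (1 - u ^ (2 * p₂.length + 2)) * u ^ 1 := by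
              apply hPval _ _ p₂ 1 hlcpp
              rw [hdrop]
              simp only [List.length_append, List.length_cons, List.length_nil] at hLj ⊢
              omega
            rw [if_neg hpne, hPpar, hPii]
            simp only [List.length_append, List.length_cons, List.length_nil]
            have := GreenAux.scalarC2 s u z msc md ((d : ℂ) / ((d : ℂ) - 1)) (d : ℂ)
              (p₂.length + 1) hmsc hsu hs2 hST hr5 hr6
            linear_combination this
        · -- i = j is interior
          rw [if_pos hint, if_neg (by omega : ¬ i.1.length = ℓ)]
          have hchv : ∀ a : Fin (d - 1), s⁻¹ * P (GreenAux.childY i a) j =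
              s⁻¹ * (md * (1 - u ^ (2 * p.length + 2)) * u ^ 1) := by
            intro a
            congr 1
            apply hPval _ _ p 1
            · rw [GreenAux.childY_coe i a hint, hip, hjp]
              have h6 := GreenAux.lcp_append p [a] []
              simpa [GreenAux.lcp_nil_right] using h6
            · rw [GreenAux.childY_coe i a hint]
              simp only [List.length_append, List.length_cons, List.length_nil]
              omega
          rw [Finset.sum_congr rfl fun a _ => hchv a, Finset.sum_const, Finset.card_univ,
            Fintype.card_fin, nsmul_eq_mul, hcastD, hPii]
          obtain rfl | ⟨p₂, c', rfl⟩ := GreenAux.eq_nil_or_append p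
          · rw [if_pos hip]
            have := GreenAux.scalarC1 s u z msc md ((d : ℂ) / ((d : ℂ) - 1)) (d : ℂ)
              0 hmsc hsu hs2 hST hr5 hr6
            simp only [List.length_nil]
            linear_combination this
          · have hpne : i.1 ≠ [] := by rw [hip]; simp
            have hdrop : (GreenAux.parY i).1 = p₂ := by
              show i.1.dropLast = p₂
              rw [hip, List.dropLast_concat]
            have hlcpp : lcp (GreenAux.parY i).1 j.1 = p₂ := by
              rw [hdrop, hjp]
              have h6 := GreenAux.lcp_append p₂ [] [c']
              simpa [GreenAux.lcp_nil_left] using h6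
            have hPpar : P (GreenAux.parY i) j = md * (1 - u ^ (2 * p₂.length + 2)) * u ^ 1 := by
              apply hPval _ _ p₂ 1 hlcpp
              rw [hdrop]
              simp only [List.length_append, List.length_cons, List.length_nil] at hLj ⊢
              omega
            rw [if_neg hpne, hPpar]
            simp only [List.length_append, List.length_cons, List.length_nil]
            have := GreenAux.scalarC1 s u z msc md ((d : ℂ) / ((d : ℂ) - 1)) (d : ℂ)
              (p₂.length + 1) hmsc hsu hs2 hST hr5 hr6
            linear_combination this
      · -- i is a strict ancestor of j
        simp only [List.length_cons] at hLj
        have hij : i ≠ j := by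
          intro h
          have h2 : i.1.length = j.1.length := by rw [h]
          omega
        rw [if_neg hij]
        have hint : i.1.length < ℓ := by omega
        rw [if_pos hint, if_neg (by omega : ¬ i.1.length = ℓ)]
        have hchv : ∀ a : Fin (d - 1), s⁻¹ * P (GreenAux.childY i a) j =
            if a = e then s⁻¹ * (md * (1 - u ^ (2 * (p.length + 1) + 2)) * u ^ t₂.length)
            else s⁻¹ * (md * (1 - u ^ (2 * p.length + 2)) * u ^ (t₂.length + 2)) := by
          intro a
          by_cases hae : a = e
          · subst hae
            rw [if_pos rfl]
            congr 1
            have h7 : lcp (GreenAux.childY i a).1 j.1 = p ++ [a] := by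
              rw [GreenAux.childY_coe i a hint, hip, htd]
              rw [GreenAux.lcp_append p [a] (a :: t₂)]
              congr 1
              show (if a = a then a :: lcp [] t₂ else []) = [a]
              simp [GreenAux.lcp_nil_left]
            have := hPval _ _ (p ++ [a]) t₂.length h7 ?_
            · simpa using this
            · rw [GreenAux.childY_coe i a hint, hip]
              simp only [List.length_append, List.length_cons, List.length_nil]
              omega
          · rw [if_neg hae]
            congr 1
            apply hPval _ _ p (t₂.length + 2)
            · rw [GreenAux.childY_coe i a hint, hip, htd]
              rw [GreenAux.lcp_append p [a] (e :: t₂)]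
              have h8 : lcp [a] (e :: t₂) = [] := by
                show (if a = e then a :: lcp [] t₂ else []) = []
                simp [hae]
              rw [h8, List.append_nil]
            · rw [GreenAux.childY_coe i a hint]
              simp only [List.length_append, List.length_cons, List.length_nil]
              omega
        rw [Finset.sum_congr rfl fun a _ => hchv a, GreenAux.sum_ite_fin e _ _, hcastD,
          hPval i j p (t₂.length + 1) hpl (by omega)]
        obtain rfl | ⟨p₂, c', rfl⟩ := GreenAux.eq_nil_or_append p
        · rw [if_pos hip]
          have := GreenAux.scalarB s u z msc md (d : ℂ) 0 t₂.length hmsc hsu hs2 hST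
          simp only [List.length_nil]
          linear_combination this
        · have hpne : i.1 ≠ [] := by rw [hip]; simp
          have hdrop : (GreenAux.parY i).1 = p₂ := by
            show i.1.dropLast = p₂
            rw [hip, List.dropLast_concat]
          have hlcpp : lcp (GreenAux.parY i).1 j.1 = p₂ := by
            rw [hdrop, htd]
            have h6 := GreenAux.lcp_append p₂ [] (c' :: e :: t₂)
            simpa [GreenAux.lcp_nil_left] using h6
          have hPpar : P (GreenAux.parY i) j =
              md * (1 - u ^ (2 * p₂.length + 2)) * u ^ (t₂.length + 2) := by
            apply hPval _ _ p₂ (t₂.length + 2) hlcpp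
            rw [hdrop]
            simp only [List.length_append, List.length_cons, List.length_nil] at hLj ⊢
            omega
          rw [if_neg hpne, hPpar]
          simp only [List.length_append, List.length_cons, List.length_nil]
          have := GreenAux.scalarB s u z msc md (d : ℂ) (p₂.length + 1) t₂.length
            hmsc hsu hs2 hST
          linear_combination this
    · -- i is not an ancestor of j
      simp only [List.length_cons] at hLi
      have hine : i.1 ≠ [] := by
        rw [hsd]
        simp
      have hij : i ≠ j := by
        intro h
        have h2 : p ++ c :: s₂ = p ++ t' := by rw [← hsd, ← htd, h]
        have h3 : t' = c :: s₂ := (List.append_cancel_left h2).symm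
        exact hcond c s₂ s₂ rfl h3
      rw [if_neg hij]
      have hcnil : ∀ xs : List (Fin (d - 1)), lcp (c :: xs) t' = [] := by
        intro xs
        by_contra hne
        obtain ⟨a, w, hw⟩ := List.exists_cons_of_ne_nil hne
        have h1 := GreenAux.lcp_prefix_left (c :: xs) t'
        have h2 := GreenAux.lcp_prefix_right (c :: xs) t'
        rw [hw] at h1 h2
        have hac : a = c := (List.cons_prefix_cons.mp h1).1
        obtain ⟨r, hr⟩ := h2
        exact hcond c s₂ (w ++ r) rfl (by rw [← hr, hac]; simp)
      have hlcppar : lcp (GreenAux.parY i).1 j.1 = p := by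
        have hdrop : (GreenAux.parY i).1 = p ++ (c :: s₂).dropLast := by
          show i.1.dropLast = _
          rw [hsd, List.dropLast_append_cons]
        rw [hdrop, htd, GreenAux.lcp_append]
        have h9 : lcp (c :: s₂).dropLast t' = [] := by
          cases s₂ with
          | nil => rfl
          | cons c₂ s₃ =>
            have : (c :: c₂ :: s₃).dropLast = c :: (c₂ :: s₃).dropLast := rfl
            rw [this, hcnil]
        rw [h9, List.append_nil]
      have hparlen : (GreenAux.parY i).1.length = p.length + s₂.length := by
        show i.1.dropLast.length = _
        rw [List.length_dropLast]
        omega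
      have hPpar : P (GreenAux.parY i) j =
          md * (1 - u ^ (2 * p.length + 2)) * u ^ (s₂.length + t'.length) := by
        apply hPval _ _ p (s₂.length + t'.length) hlcppar
        omega
      have hPij : P i j = md * (1 - u ^ (2 * p.length + 2)) * u ^ (s₂.length + t'.length + 1) :=
        hPval i j p (s₂.length + t'.length + 1) hpl (by omega)
      rw [if_neg hine, hPpar, hPij]
      rcases eq_or_lt_of_le hilen with hleaf | hint
      · -- i is a leaf
        rw [if_neg (by omega : ¬ i.1.length < ℓ), if_pos hleaf]
        have := GreenAux.scalarA2 s u z msc md (d : ℂ) p.length (s₂.length + t'.length)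
          hmsc hsu hST
        linear_combination this
      · -- i is interior
        rw [if_pos hint, if_neg (by omega : ¬ i.1.length = ℓ)]
        have hchv : ∀ a : Fin (d - 1), s⁻¹ * P (GreenAux.childY i a) j =
            s⁻¹ * (md * (1 - u ^ (2 * p.length + 2)) * u ^ (s₂.length + t'.length + 2)) := by
          intro a
          congr 1
          apply hPval _ _ p (s₂.length + t'.length + 2)
          · rw [GreenAux.childY_coe i a hint, hsd, htd, List.append_assoc]
            have h10 : (c :: s₂) ++ [a] = c :: (s₂ ++ [a]) := rfl
            rw [h10, GreenAux.lcp_append, hcnil (s₂ ++ [a]), List.append_nil]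
          · rw [GreenAux.childY_coe i a hint]
            simp only [List.length_append, List.length_cons, List.length_nil]
            omega
        rw [Finset.sum_congr rfl fun a _ => hchv a, Finset.sum_const, Finset.card_univ,
          Fintype.card_fin, nsmul_eq_mul, hcastD]
        have := GreenAux.scalarA1 s u z msc md (d : ℂ) p.length (s₂.length + t'.length)
          hmsc hsu hs2 hST
        linear_combination this
  have hMP : (HmatY d ℓ - z • 1 - msc • IbdY d ℓ) * P = 1 := by
    ext i j
    rw [Matrix.mul_apply, Matrix.one_apply]
    exact key i j
  have hInv : (HmatY d ℓ - z • 1 - msc • IbdY d ℓ)⁻¹ = P := Matrix.inv_eq_right_inv hMP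
  have hform : ∀ i j : TreeBallY (d - 1) ℓ,
      ((HmatY d ℓ - z • 1 - msc • IbdY d ℓ)⁻¹) i j =
        md * (1 - u ^ (2 * ancY i j + 2)) * u ^ ((treeGraphY (d - 1) ℓ).dist i j) := by
    intro i j
    rw [hInv, hanc, hdistf]
  refine ⟨(Matrix.isUnit_iff_isUnit_det _).mpr (Matrix.isUnit_det_of_right_inverse hMP), hform, ?_⟩
  intro i
  rw [hform]
  have h1 : ancY (rootY (d - 1) ℓ) i = 0 := by
    rw [hanc]
    rfl
  rw [h1]
  have h2 : md * (1 - u ^ (2 * 0 + 2)) = msc := by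
    have := GreenAux.scalarRoot s u z msc md ((d : ℂ) / ((d : ℂ) - 1)) ((d : ℂ)) hmsc hsu hs2
      hr5 hr6
    linear_combination this
  rw [mul_assoc] at *
  rw [← mul_assoc, h2]
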